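/- Let T be a finite tree with vertex set C and let P = (≻₁, …, ≻ₙ) be a profile of linear orders on C each of which is single-peaked on T. Then P has a weak Condorcet winner. -/

import Mathlib

/-- `x` appears strictly before `y` in the list `l`. -/
def listBefore {V : Type*} (l : List V) (x y : V) : Prop :=
  ∃ i j : Fin l.length, i < j ∧ l.get i = x ∧ l.get j = y

/-- The restriction of `r` to the finite set `X` is single peaked with respect to the
restriction of `r'` to `X`. -/
def SinglePeakedOn {V : Type*} (X : Finset V) (r r' : V → V → Prop) : Prop :=
  ∀ p ∈ X, (∀ x ∈ X, x ≠ p → r p x) →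
    ∀ x ∈ X, ∀ y ∈ X, ((r' p x ∧ r' x y) ∨ (r' y x ∧ r' x p)) → r x y

/-- A linear order `r` on the vertex set of `G` is single peaked on the tree `G`. -/
def SinglePeakedOnTree {V : Type*} [DecidableEq V] (G : SimpleGraph V)
    (r : V → V → Prop) : Prop :=
  ∀ l : List V, l.Nodup → l.Chain' G.Adj →
    SinglePeakedOn l.toFinset r (listBefore l)

open SimpleGraph

/-- Every nonempty finite set has a maximum element with respect to a strict total order. -/
lemma sptree_exists_top_aux {V : Type*} (r : V → V → Prop) (h : IsStrictTotalOrder V r)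
    (s : Finset V) : s.Nonempty → ∃ p ∈ s, ∀ x ∈ s, x ≠ p → r p x := by
  classical
  induction s using Finset.induction_on with
  | empty => rintro ⟨x, hx⟩; simp at hx
  | @insert a t hat ih =>
    intro _
    rcases t.eq_empty_or_nonempty with rfl | ht
    · exact ⟨a, by simp, by simp⟩
    · obtain ⟨p, hp, htop⟩ := ih ht
      rcases (haveI := h; trichotomous_of r p a) with hpa | hpa | hpa
      · refine ⟨p, Finset.mem_insert_of_mem hp, ?_⟩
        intro x hx hxp
        rcases Finset.mem_insert.mp hx with rfl | hx
        · exact hpa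
        · exact htop x hx hxp
      · refine ⟨a, Finset.mem_insert_self a t, ?_⟩
        intro x hx hxa
        rcases Finset.mem_insert.mp hx with rfl | hx
        · exact absurd rfl hxa
        · exact hpa ▸ htop x hx (fun e => hxa (e.trans hpa))
      · refine ⟨a, Finset.mem_insert_self a t, ?_⟩
        intro x hx hxa
        rcases Finset.mem_insert.mp hx with rfl | hx
        · exact absurd rfl hxa
        · by_cases hxp : x = p
          · exact hxp ▸ hpa
          · exact h.trans _ _ _ hpa (htop x hx hxp)

/-- If `c` is an interior vertex of a walk from `p` to `y`, then `p` comes before `c`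
and `c` comes before `y` in the support. -/
lemma sptree_listBefore_aux {V : Type*} {G : SimpleGraph V} {p y c : V} (w : G.Walk p y)
    (hc : c ∈ w.support) (hcp : c ≠ p) (hcy : c ≠ y) :
    listBefore w.support p c ∧ listBefore w.support c y := by
  set l := w.support with hl
  have hlen : 0 < l.length := List.length_pos_iff.mpr w.support_ne_nil
  obtain ⟨j, hj⟩ := List.mem_iff_get.mp hc
  have h0 : l.get ⟨0, hlen⟩ = p := by
    rw [List.get_mk_zero]
    exact w.head_support
  have hlast : l.get ⟨l.length - 1, by omega⟩ = y := by
    rw [List.get_eq_getElem, ← List.getLast_eq_getElem w.support_ne_nil]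
    exact w.getLast_support
  have hj0 : (0 : ℕ) < j.val := by
    rcases Nat.eq_zero_or_pos j.val with h | h
    · exfalso; apply hcp; rw [← hj]; rw [← h0]; congr 1; exact Fin.ext h
    · exact h
  have hjlast : j.val < l.length - 1 := by
    have hjle : j.val ≤ l.length - 1 := by omega
    rcases lt_or_eq_of_le hjle with h | h
    · exact h
    · exfalso; apply hcy; rw [← hj, ← hlast]; congr 1; exact Fin.ext h
  constructor
  · exact ⟨⟨0, hlen⟩, j, hj0, h0, hj⟩
  · exact ⟨j, ⟨l.length - 1, by omega⟩, hjlast, hj, hlast⟩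

/-- In a tree, two neighbors of `c` joined by a walk avoiding `c` must be equal. -/
lemma sptree_neighbor_eq {V : Type*} [DecidableEq V] {G : SimpleGraph V} (hT : G.IsTree) {c b b' : V}
    (hb : G.Adj c b) (hb' : G.Adj c b') (w : G.Walk b b') (hw : c ∉ w.support) : b = b' := by
  by_contra hne
  have hp : (Walk.cons hb.symm (Walk.cons hb' Walk.nil) : G.Walk b b').IsPath := by
    simp [Walk.isPath_def, hb.ne', hb'.ne', hb'.ne, hne]
  have huniq := hT.IsAcyclic.path_unique w.toPath ⟨_, hp⟩
  have hc2 : c ∈ (Walk.cons hb.symm (Walk.cons hb' Walk.nil) : G.Walk b b').support := by simp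
  have : c ∈ (w.toPath : G.Walk b b').support := by
    rw [huniq]; exact hc2
  exact hw (w.support_toPath_subset this)

/-- In a tree, if a walk from a neighbor `b` of `c` to `p` avoids `c`, then
`dist c p = dist b p + 1`. -/
lemma sptree_dist_dec {V : Type*} [DecidableEq V] {G : SimpleGraph V} (hT : G.IsTree)
    {c b p : V} (hb : G.Adj c b) (w : G.Walk b p) (hw : c ∉ w.support) :
    G.dist c p = G.dist b p + 1 := by
  have hconn := hT.isConnected
  have hcp : c ≠ p := fun h => hw (h ▸ w.end_mem_support)
  have hle : G.dist c p ≤ G.dist b p + 1 := by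
    calc G.dist c p ≤ G.dist c b + G.dist b p := hconn.dist_triangle
    _ ≤ 1 + G.dist b p := by
        have := G.dist_le (Walk.cons hb Walk.nil)
        simpa using Nat.add_le_add_right this (G.dist b p)
    _ = G.dist b p + 1 := Nat.add_comm _ _
  have hge : G.dist b p + 1 ≤ G.dist c p := by
    obtain ⟨g0, hg0⟩ := (hconn.preconnected c p).exists_walk_length_eq_dist
    have hglen : (g0.toPath : G.Walk c p).length = G.dist c p := by
      have h1 : (g0.toPath : G.Walk c p).length ≤ g0.length := Walk.length_bypass_le _
      have h2 : G.dist c p ≤ (g0.toPath : G.Walk c p).length := G.dist_le _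
      omega
    obtain ⟨b', hadj', g', hg'⟩ := Walk.exists_eq_cons_of_ne hcp (g0.toPath : G.Walk c p)
    have hpath : (g0.toPath : G.Walk c p).IsPath := g0.toPath.2
    rw [hg'] at hpath hglen
    rw [Walk.cons_isPath_iff] at hpath
    have hcg' : c ∉ g'.support := hpath.2
    -- walk from b to b' avoiding c
    have hbb' : b = b' := by
      refine sptree_neighbor_eq hT hb hadj' (w.append g'.reverse) ?_
      rw [Walk.mem_support_append_iff]
      rintro (h | h)
      · exact hw h
      · rw [Walk.support_reverse] at h; exact hcg' (List.mem_reverse.mp h)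
    have : G.dist b p ≤ g'.length := hbb' ▸ G.dist_le g'
    rw [Walk.length_cons] at hglen
    omega
  omega

/-- In a tree, if every walk from a neighbor `b` of `c` to `p` passes through `c`, then
`dist b p = dist c p + 1`. -/
lemma sptree_dist_inc {V : Type*} [DecidableEq V] {G : SimpleGraph V} (hT : G.IsTree)
    {c b p : V} (hb : G.Adj c b) (hall : ∀ w : G.Walk b p, c ∈ w.support) :
    G.dist b p = G.dist c p + 1 := by
  have hconn := hT.isConnected
  have hle : G.dist b p ≤ G.dist c p + 1 := by
    calc G.dist b p ≤ G.dist b c + G.dist c p := hconn.dist_triangle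
    _ ≤ 1 + G.dist c p := by
        have := G.dist_le (Walk.cons hb.symm Walk.nil)
        simpa using Nat.add_le_add_right this (G.dist c p)
    _ = G.dist c p + 1 := Nat.add_comm _ _
  have hge : G.dist c p + 1 ≤ G.dist b p := by
    obtain ⟨g, hg⟩ := (hconn.preconnected b p).exists_walk_length_eq_dist
    have hc : c ∈ g.support := hall g
    have hsplit := congrArg Walk.length (g.take_spec hc)
    rw [Walk.length_append] at hsplit
    have h1 : G.dist b c ≤ (g.takeUntil c hc).length := G.dist_le _
    have h2 : G.dist c p ≤ (g.dropUntil c hc).length := G.dist_le _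
    have hbc : 0 < G.dist b c := hconn.pos_dist_of_ne hb.ne'
    omega
  omega

/-- Every profile of linear orders on the vertex set of a finite tree, each of which is
single peaked on the tree, has a weak Condorcet winner. -/
theorem singlePeaked_on_tree_weakCondorcet_exists
    {V : Type*} [Fintype V] [DecidableEq V] (G : SimpleGraph V) (hT : G.IsTree)
    {n : ℕ} (P : Fin n → V → V → Prop) [∀ i, DecidableRel (P i)]
    (hP : ∀ i, IsStrictTotalOrder V (P i))
    (hsp : ∀ i, SinglePeakedOnTree G (P i)) :
    ∃ c : V, ∀ y : V, y ≠ c →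
      2 * (Finset.univ.filter fun i => P i y c).card ≤ n := by
  classical
  have hconn := hT.isConnected
  have hne : Nonempty V := hconn.nonempty
  -- the peak of each voter
  have hpk : ∀ i, ∃ p : V, ∀ x, x ≠ p → P i p x := by
    intro i
    obtain ⟨p, _, hp⟩ := sptree_exists_top_aux (P i) (hP i) Finset.univ Finset.univ_nonempty
    exact ⟨p, fun x hx => hp x (Finset.mem_univ x) hx⟩
  choose pk hpk using hpk
  -- choose c minimizing total distance to the peaks
  obtain ⟨c, -, hc⟩ := Finset.exists_min_image Finset.univ
    (fun v => ∑ i, G.dist v (pk i)) Finset.univ_nonempty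
  refine ⟨c, fun y hy => ?_⟩
  -- voters whose peak is in the same component as y after deleting c
  set A : Finset (Fin n) :=
    Finset.univ.filter (fun i => ∃ w : G.Walk y (pk i), c ∉ w.support) with hA
  -- every voter preferring y to c has its peak in the component of y
  have hsub : (Finset.univ.filter fun i => P i y c) ⊆ A := by
    intro i hi
    rw [Finset.mem_filter] at hi
    obtain ⟨-, hiyc⟩ := hi
    rw [hA, Finset.mem_filter]
    refine ⟨Finset.mem_univ i, ?_⟩
    by_contra hno
    push_neg at hno
    haveI := hP i
    -- the peak is not c
    have hpkc : pk i ≠ c := by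
      rintro h
      have : P i (pk i) y := hpk i y (fun e => hy (e.trans h))
      rw [h] at this
      exact absurd hiyc (asymm this)
    -- take the tree path from pk i to y; it must pass through c
    obtain ⟨w0⟩ := hconn.preconnected (pk i) y
    set w : G.Walk (pk i) y := (w0.toPath : G.Walk (pk i) y) with hw
    have hcmem : c ∈ w.support := by
      have := hno w.reverse
      rw [Walk.support_reverse, List.mem_reverse] at this
      exact this
    have hcpk : c ≠ pk i := Ne.symm hpkc
    have hcy : c ≠ y := Ne.symm hy
    obtain ⟨hb1, hb2⟩ := sptree_listBefore_aux w hcmem hcpk hcy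
    have hnodup : w.support.Nodup := w0.toPath.2.2
    have hchain : w.support.Chain' G.Adj := Walk.isChain_adj_support w
    have hspi := hsp i w.support hnodup hchain (pk i)
      (by rw [List.mem_toFinset]; exact w.start_mem_support)
      (fun x _ hx => hpk i x hx) c (by rw [List.mem_toFinset]; exact hcmem)
      y (by rw [List.mem_toFinset]; exact w.end_mem_support)
      (Or.inl ⟨hb1, hb2⟩)
    exact absurd hiyc (asymm hspi)
  -- the component of y contains at most n/2 peaks
  have hcard : 2 * A.card ≤ n := by
    -- get the first step b on the path from c to y
    obtain ⟨wy0⟩ := hconn.preconnected c y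
    obtain ⟨b, hadj, w1', hw1'⟩ := Walk.exists_eq_cons_of_ne (Ne.symm hy)
      (wy0.toPath : G.Walk c y)
    have hpath : (wy0.toPath : G.Walk c y).IsPath := wy0.toPath.2
    rw [hw1', Walk.cons_isPath_iff] at hpath
    have hcw1 : c ∉ w1'.support := hpath.2
    -- pointwise distance comparison
    have hpoint : ∀ i : Fin n,
        G.dist b (pk i) + (if i ∈ A then 2 else 0) = G.dist c (pk i) + 1 := by
      intro i
      by_cases hiA : i ∈ A
      · rw [if_pos hiA]
        rw [hA, Finset.mem_filter] at hiA
        obtain ⟨-, wyp, hwyp⟩ := hiA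
        have hdec := sptree_dist_dec hT hadj (w1'.append wyp) (by
          rw [Walk.mem_support_append_iff]
          rintro (h | h)
          · exact hcw1 h
          · exact hwyp h)
        omega
      · rw [if_neg hiA]
        rw [hA, Finset.mem_filter] at hiA
        push_neg at hiA
        have hall : ∀ w : G.Walk b (pk i), c ∈ w.support := by
          intro w
          by_contra hcw
          have := hiA (Finset.mem_univ i) (w1'.reverse.append w)
          rw [Walk.mem_support_append_iff] at this
          rcases this with h | h
          · rw [Walk.support_reverse, List.mem_reverse] at h
            exact hcw1 h
          · exact hcw h
        have hinc := sptree_dist_inc hT hadj hall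
        omega
    have hsum : (∑ i, G.dist b (pk i)) + 2 * A.card = (∑ i, G.dist c (pk i)) + n := by
      have h1 : ∑ i : Fin n, (G.dist b (pk i) + (if i ∈ A then 2 else 0))
          = ∑ i : Fin n, (G.dist c (pk i) + 1) := Finset.sum_congr rfl (fun i _ => hpoint i)
      rw [Finset.sum_add_distrib, Finset.sum_add_distrib] at h1
      have h2 : ∑ i : Fin n, (if i ∈ A then 2 else 0) = 2 * A.card := by
        rw [Finset.sum_ite_mem, Finset.univ_inter, Finset.sum_const, smul_eq_mul, mul_comm]
      have h3 : ∑ _i : Fin n, 1 = n := by simp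
      rw [h2, h3] at h1
      exact h1
    have hmin : (∑ i, G.dist c (pk i)) ≤ ∑ i, G.dist b (pk i) := hc b (Finset.mem_univ b)
    omega
  calc 2 * (Finset.univ.filter fun i => P i y c).card
      ≤ 2 * A.card := Nat.mul_le_mul_left 2 (Finset.card_le_card hsub)
    _ ≤ n := hcard
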